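/- Define h(x) := x^α · m(τ > x) − M(x) for x ≥ 1, so that m(τ > x) = x^{−α}(M(x) + h(x)). Then for every continuity point x of M (equivalently, every x > 0 with {log_G(x/q₀)} > 0), lim_{n→∞} h(A_{k_n} · x) = 0, where k_n = ⌊G^{αn}⌋ and A_{k_n} = k_n^{1/α}. In other words, the return time τ belongs to the domain of geometric partial attraction of a semistable law of order α, with c = G^α, ℓ ≡ 1, subsequence k_n = ⌊G^{αn}⌋, and logarithmically periodic function M. -/

import Mathlib

open Set Filter Topology Real MeasureTheory

/-- The Fibonacci numbers `S₀ = 1, S₁ = 2, S_{n+1} = S_n + S_{n−1}`. -/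
def fibS : ℕ → ℕ
  | 0 => 1
  | 1 => 2
  | n + 2 => fibS (n + 1) + fibS n

/-- The golden mean `G = (1+√5)/2`. -/
noncomputable def goldG : ℝ := (1 + Real.sqrt 5) / 2

/-- The constant `q₀ = (3+√5)/(2√5)`. -/
noncomputable def qZero : ℝ := (3 + Real.sqrt 5) / (2 * Real.sqrt 5)

noncomputable def gcj : ℝ := (1 - Real.sqrt 5) / 2

lemma sqrt5_sq : Real.sqrt 5 ^ 2 = 5 := Real.sq_sqrt (by norm_num)
lemma sqrt5_gt_two : 2 < Real.sqrt 5 := by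
  nlinarith [sqrt5_sq, Real.sqrt_nonneg 5]
lemma sqrt5_lt_three : Real.sqrt 5 < 3 := by
  nlinarith [sqrt5_sq, Real.sqrt_nonneg 5]
lemma goldG_gt_one : 1 < goldG := by unfold goldG; nlinarith [sqrt5_gt_two]
lemma goldG_pos : 0 < goldG := lt_trans one_pos goldG_gt_one
lemma goldG_sq : goldG ^ 2 = goldG + 1 := by
  unfold goldG; field_simp; nlinarith [sqrt5_sq]
lemma gcj_sq : gcj ^ 2 = gcj + 1 := by
  unfold gcj; field_simp; nlinarith [sqrt5_sq]
lemma qZero_pos : 0 < qZero := by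
  unfold qZero; positivity
lemma abs_gcj_le_one : |gcj| ≤ 1 := by
  rw [abs_le]; unfold gcj; constructor <;> nlinarith [sqrt5_gt_two, sqrt5_lt_three]

lemma pow_rec {a : ℝ} (ha : a ^ 2 = a + 1) (k : ℕ) : a ^ (k + 2) = a ^ (k + 1) + a ^ k := by
  have : a ^ (k + 2) = a ^ k * a ^ 2 := by ring
  rw [this, ha]; ring

lemma binet (n : ℕ) : (fibS n : ℝ) = qZero * goldG ^ n - gcj ^ (n + 2) / Real.sqrt 5 := by
  have h5 : (0:ℝ) < Real.sqrt 5 := lt_trans two_pos sqrt5_gt_two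
  have base0 : (fibS 0 : ℝ) = qZero * goldG ^ 0 - gcj ^ 2 / Real.sqrt 5 := by
    have h1 : fibS 0 = 1 := rfl
    rw [h1]
    unfold qZero gcj
    field_simp
    push_cast
    nlinarith [sqrt5_sq]
  have base1 : (fibS 1 : ℝ) = qZero * goldG ^ 1 - gcj ^ 3 / Real.sqrt 5 := by
    have h1 : fibS 1 = 2 := rfl
    rw [h1]
    unfold qZero gcj goldG
    field_simp
    push_cast
    nlinarith [sqrt5_sq]
  have key : ∀ n, (fibS n : ℝ) = qZero * goldG ^ n - gcj ^ (n + 2) / Real.sqrt 5 ∧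
      (fibS (n+1) : ℝ) = qZero * goldG ^ (n+1) - gcj ^ (n + 3) / Real.sqrt 5 := by
    intro n
    induction n with
    | zero => exact ⟨base0, base1⟩
    | succ k ih =>
      refine ⟨ih.2, ?_⟩
      have : (fibS (k + 2) : ℝ) = (fibS (k+1) : ℝ) + (fibS k : ℝ) := by
        rw [show fibS (k+2) = fibS (k+1) + fibS k from rfl]; push_cast; ring
      rw [this, ih.1, ih.2, pow_rec goldG_sq k, pow_rec gcj_sq (k+2)]
      ring
  exact (key n).1

lemma fib_bounds (n : ℕ) : |(fibS n : ℝ) - qZero * goldG ^ n| ≤ 1/2 := by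
  have h5 : (2:ℝ) < Real.sqrt 5 := sqrt5_gt_two
  rw [binet n]
  have h1 : |gcj ^ (n+2)| ≤ 1 := by
    rw [abs_pow]; exact pow_le_one₀ (abs_nonneg _) abs_gcj_le_one
  rw [show qZero * goldG ^ n - gcj ^ (n + 2) / Real.sqrt 5 - qZero * goldG ^ n
      = -(gcj ^ (n+2) / Real.sqrt 5) by ring, abs_neg, abs_div]
  rw [abs_of_pos (by linarith : (0:ℝ) < Real.sqrt 5)]
  rw [div_le_iff₀ (by linarith)]
  nlinarith [abs_nonneg (gcj ^ (n+2))]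

lemma fibS_ge_aux (n : ℕ) : 1 ≤ fibS n := by
  induction n using fibS.induct with
  | case1 => norm_num [fibS]
  | case2 => norm_num [fibS]
  | case3 n ih1 ih2 => show 1 ≤ fibS (n+1) + fibS n; omega

lemma fibS_lt_succ (n : ℕ) : fibS n < fibS (n + 1) := by
  induction n with
  | zero => norm_num [fibS]
  | succ k ih =>
    have hpos : 0 < fibS k := by
      have := fibS_ge_aux k; omega
    show fibS (k+1) < fibS (k+1) + fibS k
    omega
lemma fibS_mono : StrictMono fibS := strictMono_nat_of_lt_succ fibS_lt_succ
lemma fibS_ge (n : ℕ) : n + 1 ≤ fibS n := by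
  induction n with
  | zero => norm_num [fibS]
  | succ k ih => have := fibS_lt_succ k; omega

lemma exists_fib_gt (x : ℝ) : ∃ n, x < (fibS n : ℝ) := by
  obtain ⟨n, hn⟩ := exists_nat_gt x
  refine ⟨n, lt_of_lt_of_le hn ?_⟩
  exact_mod_cast (Nat.le_succ n).trans (fibS_ge n)

lemma tail_set_eq (lam : ℝ) (h0 : 0 < lam) (h1 : lam < 1)
    (τ : ℝ → ℕ) (hτ : ∀ n : ℕ, ∀ y ∈ Set.Ioc (lam ^ (n+1)) (lam ^ n), τ y = fibS n)
    (x : ℝ) (n₀ : ℕ) (hn₀ : x < (fibS n₀ : ℝ)) (hmin : ∀ m, m < n₀ → ¬ (x < (fibS m : ℝ))) :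
    {y : ℝ | y ∈ Set.Ioc (0:ℝ) 1 ∧ x < (τ y : ℝ)} = Set.Ioc 0 (lam ^ n₀) := by
  have hlevel : ∀ y : ℝ, 0 < y → y ≤ 1 → ∃ m : ℕ, y ∈ Set.Ioc (lam ^ (m+1)) (lam ^ m) := by
    intro y hy hy1
    have hex : ∃ k, lam ^ k < y := by
      obtain ⟨k, hk⟩ := exists_pow_lt_of_lt_one hy h1
      exact ⟨k, hk⟩
    classical
    set k := Nat.find hex with hkdef
    have hk : lam ^ k < y := Nat.find_spec hex
    have hk0 : k ≠ 0 := by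
      intro h; rw [h] at hk; simp at hk; linarith
    obtain ⟨m, hm⟩ := Nat.exists_eq_succ_of_ne_zero hk0
    rw [hm] at hk
    have hle : ¬ (lam ^ m < y) := by
      rw [hkdef] at hm
      exact Nat.find_min hex (by omega)
    exact ⟨m, hk, not_lt.1 hle⟩
  ext y
  simp only [Set.mem_setOf_eq, Set.mem_Ioc]
  constructor
  · rintro ⟨⟨hy0, hy1⟩, hxy⟩
    obtain ⟨m, hm1, hm2⟩ := hlevel y hy0 hy1
    rw [hτ m y ⟨hm1, hm2⟩] at hxy
    have hmge : n₀ ≤ m := by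
      by_contra hc
      exact hmin m (not_le.1 hc) hxy
    exact ⟨hy0, hm2.trans (pow_le_pow_of_le_one h0.le h1.le hmge)⟩
  · rintro ⟨hy0, hy1⟩
    have hyle1 : y ≤ 1 := hy1.trans (pow_le_one₀ h0.le h1.le)
    obtain ⟨m, hm1, hm2⟩ := hlevel y hy0 hyle1
    have hmge : n₀ ≤ m := by
      by_contra hc
      have : lam ^ (m+1) < lam ^ n₀ := lt_of_lt_of_le hm1 hy1
      have := pow_lt_pow_iff_right_of_lt_one₀ h0 h1 |>.1 this
      omega
    refine ⟨⟨hy0, hyle1⟩, ?_⟩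
    rw [hτ m y ⟨hm1, hm2⟩]
    calc x < (fibS n₀ : ℝ) := hn₀
      _ ≤ (fibS m : ℝ) := by exact_mod_cast fibS_mono.monotone hmge

lemma tail_vol (lam : ℝ) (h0 : 0 < lam) (h1 : lam < 1)
    (τ : ℝ → ℕ) (hτ : ∀ n : ℕ, ∀ y ∈ Set.Ioc (lam ^ (n+1)) (lam ^ n), τ y = fibS n)
    (x : ℝ) (n₀ : ℕ) (hn₀ : x < (fibS n₀ : ℝ)) (hmin : ∀ m, m < n₀ → ¬ (x < (fibS m : ℝ))) :
    (volume {y : ℝ | y ∈ Set.Ioc (0:ℝ) 1 ∧ x < (τ y : ℝ)}).toReal = lam ^ n₀ := by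
  rw [tail_set_eq lam h0 h1 τ hτ x n₀ hn₀ hmin, Real.volume_Ioc,
    ENNReal.toReal_ofReal (by simp; positivity)]
  ring

set_option maxHeartbeats 1000000 in
/-- the Fibonacci return time is in the domain of geometric partial
attraction of a semistable law. With `h(x) = x^α m(τ > x) − M(x)`, so that
`m(τ > x) = x^{−α}(M(x) + h(x))`, one has `h(A_{k_n} x) → 0` for every continuity point
`x` of `M` (i.e. every `x > 0` with `{log_G(x/q₀)} > 0`), where `k_n = ⌊G^{αn}⌋` and
`A_{k_n} = k_n^{1/α}`. -/
theorem stmt_13 (lam : ℝ) (hlam1 : 1 / goldG < lam) (hlam2 : lam < 1)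
    (α : ℝ) (hα : α = -Real.log lam / Real.log goldG)
    -- the return time τ: τ(y) = S_n for y ∈ (λ^{n+1}, λ^n]
    (τ : ℝ → ℕ)
    (hτ : ∀ n : ℕ, ∀ y ∈ Set.Ioc (lam ^ (n + 1)) (lam ^ n), τ y = fibS n)
    -- the logarithmically periodic function M(x) = q_∞ G^{α{log_G(x/q₀)}}, q_∞ = λ q₀^α
    (M : ℝ → ℝ)
    (hM : ∀ x > (0 : ℝ), M x =
      (lam * qZero ^ α) * goldG ^ (α * Int.fract (Real.log (x / qZero) / Real.log goldG)))
    -- the error function h(x) = x^α · m(τ > x) − M(x)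
    (h : ℝ → ℝ)
    (hh : ∀ x ≥ (1 : ℝ), h x =
      x ^ α * (volume {y : ℝ | y ∈ Set.Ioc (0 : ℝ) 1 ∧ x < (τ y : ℝ)}).toReal - M x) :
    (∀ x ≥ (1 : ℝ),
      (volume {y : ℝ | y ∈ Set.Ioc (0 : ℝ) 1 ∧ x < (τ y : ℝ)}).toReal
        = x ^ (-α) * (M x + h x)) ∧
    ∀ x > (0 : ℝ), 0 < Int.fract (Real.log (x / qZero) / Real.log goldG) →
      Filter.Tendsto
        (fun n : ℕ => h (((⌊goldG ^ (α * (n : ℝ))⌋₊ : ℝ) ^ (1 / α)) * x))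
        Filter.atTop (nhds 0) := by
  classical
  have hG1 : 1 < goldG := goldG_gt_one
  have hG0 : (0:ℝ) < goldG := lt_trans one_pos hG1
  have hlogG : 0 < Real.log goldG := Real.log_pos hG1
  have hlam0 : 0 < lam := lt_trans (by positivity) hlam1
  have hloglam : Real.log lam < 0 := Real.log_neg hlam0 hlam2
  have hα0 : 0 < α := by rw [hα]; exact div_pos (by linarith) hlogG
  have hlamG : goldG ^ (-α) = lam := by
    have hexp : (-α) * Real.log goldG = Real.log lam := by
      rw [hα]; field_simp
    rw [Real.rpow_def_of_pos hG0, mul_comm, hexp, Real.exp_log hlam0]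
  constructor
  · -- Part 1
    intro x hx
    have hx0 : (0:ℝ) < x := lt_of_lt_of_le one_pos hx
    set V := (volume {y : ℝ | y ∈ Set.Ioc (0 : ℝ) 1 ∧ x < (τ y : ℝ)}).toReal with hV
    rw [hh x hx]
    have h1 : M x + (x ^ α * V - M x) = x ^ α * V := by ring
    rw [h1, ← mul_assoc, ← Real.rpow_add hx0]
    simp
  · -- Part 2
    intro x hx hfrac
    set L : ℝ := Real.log (x / qZero) / Real.log goldG with hLdef
    set β : ℝ := Int.fract L with hβdef
    have hβ0 : 0 < β := hfrac
    have hβ1 : β < 1 := Int.fract_lt_one L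
    set FL : ℤ := ⌊L⌋ with hFLdef
    have hLsplit : L = (FL:ℝ) + β := by rw [hβdef, hFLdef, Int.floor_add_fract]
    set c : ℝ := goldG ^ α with hcdef
    have hc1 : 1 < c := by
      rw [hcdef]
      exact Real.one_lt_rpow_iff_of_pos hG0 |>.2 (Or.inl ⟨hG1, hα0⟩)
    have hc0 : (0:ℝ) < c := lt_trans one_pos hc1
    have hcn : ∀ n : ℕ, goldG ^ (α * (n:ℝ)) = c ^ n := by
      intro n
      rw [Real.rpow_mul hG0.le, Real.rpow_natCast]
    have hcpow1 : ∀ n : ℕ, (1:ℝ) ≤ c ^ n := fun n => one_le_pow₀ hc1.le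
    set kn : ℕ → ℕ := fun n => ⌊c ^ n⌋₊ with hkndef
    have hkn1 : ∀ n, (1:ℝ) ≤ (kn n : ℝ) := by
      intro n
      exact_mod_cast Nat.one_le_cast.2 (Nat.le_floor (by exact_mod_cast hcpow1 n))
    have hkn0 : ∀ n, (0:ℝ) < (kn n : ℝ) := fun n => lt_of_lt_of_le one_pos (hkn1 n)
    have hknle : ∀ n, (kn n : ℝ) ≤ c ^ n := fun n => Nat.floor_le (by positivity)
    have hkngt : ∀ n, c ^ n - 1 < (kn n : ℝ) := by
      intro n
      have := Nat.lt_floor_add_one (c ^ n)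
      linarith
    set t : ℕ → ℝ := fun n => (kn n : ℝ) / c ^ n with htdef
    have ht0 : ∀ n, 0 < t n := fun n => div_pos (hkn0 n) (by positivity)
    have ht1 : ∀ n, t n ≤ 1 := by
      intro n
      rw [htdef, div_le_one (by positivity)]
      exact hknle n
    have htlb : ∀ n, 1 - (c⁻¹) ^ n ≤ t n := by
      intro n
      rw [htdef, le_div_iff₀ (by positivity : (0:ℝ) < c ^ n)]
      have : (1 - c⁻¹ ^ n) * c ^ n = c ^ n - 1 := by
        field_simp
        rw [sub_mul, div_pow, one_pow, one_mul, div_mul_cancel₀ _ (by positivity)]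
      rw [this]
      exact (hkngt n).le
    have htlim : Tendsto t atTop (nhds 1) := by
      have h1 : Tendsto (fun n : ℕ => 1 - (c⁻¹) ^ n) atTop (nhds 1) := by
        have := tendsto_pow_atTop_nhds_zero_of_lt_one
          (by positivity : (0:ℝ) ≤ c⁻¹) (by rw [inv_lt_one_iff₀]; right; exact hc1)
        have := (tendsto_const_nhds (x := (1:ℝ)) (f := atTop)).sub this
        simpa using this
      exact tendsto_of_tendsto_of_tendsto_of_le_of_le h1 tendsto_const_nhds htlb ht1
    set δ : ℕ → ℝ := fun n => Real.log (t n) / (α * Real.log goldG) with hδdef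
    have hδ0 : ∀ n, δ n ≤ 0 := by
      intro n
      apply div_nonpos_of_nonpos_of_nonneg
      · exact Real.log_nonpos (ht0 n).le (ht1 n)
      · positivity
    have hδlim : Tendsto δ atTop (nhds 0) := by
      have hlog : Tendsto (fun n => Real.log (t n)) atTop (nhds 0) := by
        have := (Real.continuousAt_log one_ne_zero).tendsto.comp htlim
        simpa [Function.comp_def] using this
      have := hlog.div_const (α * Real.log goldG)
      simpa using this
    -- the sequence y n
    set y : ℕ → ℝ := fun n => ((⌊goldG ^ (α * (n : ℝ))⌋₊ : ℝ) ^ (1 / α)) * x with hydef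
    have hyeq : ∀ n, y n = ((kn n : ℝ) ^ (1/α)) * x := by
      intro n
      simp only [hydef, hkndef, hcn n]
    have hy0 : ∀ n, 0 < y n := by
      intro n
      rw [hyeq n]
      exact mul_pos (Real.rpow_pos_of_pos (hkn0 n) _) hx
    -- key exponent identity
    have hLy : ∀ n : ℕ, Real.log (y n / qZero) / Real.log goldG
        = ((n:ℝ) + (FL:ℝ)) + (β + δ n) := by
      intro n
      have hlogkn : Real.log (kn n : ℝ) = Real.log (t n) + (n:ℝ) * (α * Real.log goldG) := by
        have hkeq : (kn n : ℝ) = t n * c ^ n := by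
          rw [htdef]; field_simp
        rw [hkeq, Real.log_mul (ht0 n).ne' (by positivity), Real.log_pow, hcdef,
          Real.log_rpow hG0]
      rw [Real.log_div (hy0 n).ne' qZero_pos.ne', hyeq n,
        Real.log_mul (Real.rpow_pos_of_pos (hkn0 n) _).ne' hx.ne',
        Real.log_rpow (hkn0 n), hlogkn]
      have hLx : Real.log x - Real.log qZero = L * Real.log goldG := by
        rw [hLdef, Real.log_div hx.ne' qZero_pos.ne']
        field_simp
      have hδn : Real.log (t n) = δ n * (α * Real.log goldG) := by
        rw [hδdef]; field_simp
      rw [hδn]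
      rw [hLsplit] at hLx
      field_simp
      nlinarith [hLx, hlogG, hα0]
    -- rpow representation of y n
    have hyrpow : ∀ n : ℕ, y n = qZero * goldG ^ (((n:ℝ) + (FL:ℝ)) + (β + δ n)) := by
      intro n
      have hrb := Real.rpow_logb hG0 hG1.ne' (div_pos (hy0 n) qZero_pos)
      have hlogb : Real.logb goldG (y n / qZero) = ((n:ℝ) + (FL:ℝ)) + (β + δ n) := by
        rw [Real.logb, hLy n]
      rw [← hlogb, hrb, eq_comm, mul_comm qZero (y n / qZero),
        div_mul_cancel₀ (y n) qZero_pos.ne']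
    set A : ℝ := 1 - goldG ^ (β - 1) with hAdef
    have hA0 : 0 < A := by
      have : goldG ^ (β - 1) < 1 := Real.rpow_lt_one_of_one_lt_of_neg hG1 (by linarith)
      rw [hAdef]; linarith
    set B : ℝ := goldG ^ (β/2) - 1 with hBdef
    have hB0 : 0 < B := by
      have : 1 < goldG ^ (β/2) :=
        Real.one_lt_rpow_iff_of_pos hG0 |>.2 (Or.inl ⟨hG1, by linarith⟩)
      rw [hBdef]; linarith
    clear_value A B
    have htop : Tendsto (fun n : ℕ => qZero * goldG ^ ((n:ℝ) + (FL:ℝ))) atTop atTop := by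
      have hsplit : ∀ n : ℕ, (qZero * goldG ^ ((FL:ℝ))) * goldG ^ (n:ℕ)
          = qZero * goldG ^ ((n:ℝ) + (FL:ℝ)) := by
        intro n
        rw [Real.rpow_add hG0, ← Real.rpow_natCast goldG n]
        ring
      have hpos : (0:ℝ) < qZero * goldG ^ ((FL:ℝ)) :=
        mul_pos qZero_pos (Real.rpow_pos_of_pos hG0 _)
      have h2 : Tendsto (fun n : ℕ => (qZero * goldG ^ ((FL:ℝ))) * goldG ^ n) atTop atTop :=
        Tendsto.const_mul_atTop hpos (tendsto_pow_atTop_atTop_of_one_lt hG1)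
      exact h2.congr hsplit
    set E : ℝ := max (1/A) (max (1/B) 1) with hEdef
    have evE : ∀ᶠ n : ℕ in atTop, E ≤ qZero * goldG ^ ((n:ℝ) + (FL:ℝ)) :=
      htop.eventually_ge_atTop E
    have evδ : ∀ᶠ n : ℕ in atTop, δ n ∈ Set.Ioo (-(β/2)) (1 - β) :=
      hδlim (Ioo_mem_nhds (by linarith) (by linarith))
    have evN : ∀ᶠ n : ℕ in atTop, (1:ℤ) ≤ (n:ℤ) + FL :=
      Filter.eventually_atTop.2 ⟨(1 - FL).toNat, fun n hn => by omega⟩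
    have hzero : ∀ᶠ n : ℕ in atTop, h (y n) = 0 := by
      filter_upwards [evE, evδ, evN] with n hE hδn hN
      set N : ℕ := ((n:ℤ) + FL + 1).toNat with hNdef
      have hNZ : (N:ℤ) = (n:ℤ) + FL + 1 := Int.toNat_of_nonneg (by omega)
      have hNR : (N:ℝ) = (n:ℝ) + (FL:ℝ) + 1 := by
        have := congrArg (fun z : ℤ => (z:ℝ)) hNZ
        push_cast at this
        exact this
      have hN1 : 1 ≤ N := by omega
      clear_value N
      set P : ℝ := goldG ^ ((n:ℝ) + (FL:ℝ)) with hPdef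
      have hP0 : 0 < P := Real.rpow_pos_of_pos hG0 _
      clear_value P
      have hPA : 1 ≤ qZero * P * A := by
        have h1 : 1/A ≤ qZero * P := le_trans (le_max_left _ _) hE
        rw [div_le_iff₀ hA0] at h1
        linarith
      have hPB : 1 ≤ qZero * P * B := by
        have h1 : 1/B ≤ qZero * P := le_trans ((le_max_left _ _).trans (le_max_right _ _)) hE
        rw [div_le_iff₀ hB0] at h1
        linarith
      have hP1 : 1 ≤ qZero * P := le_trans ((le_max_right _ _).trans (le_max_right _ _)) hE
      have hβδ0 : 0 < β + δ n := by have := hδn.1; linarith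
      have hβδ1 : β + δ n < 1 := by have := hδn.2; linarith
      have hβδβ : β + δ n ≤ β := by have := hδ0 n; linarith
      have hysplit : y n = qZero * (P * goldG ^ (β + δ n)) := by
        rw [hyrpow n, Real.rpow_add hG0, hPdef]
      have hGβ : goldG ^ β = goldG * goldG ^ (β - 1) := by
        have h1 : goldG ^ ((1:ℝ) + (β-1)) = goldG ^ (1:ℝ) * goldG ^ (β-1) :=
          Real.rpow_add hG0 1 (β-1)
        rw [Real.rpow_one] at h1
        rw [← h1]
        ring_nf
      have hymax : y n ≤ qZero * P * goldG ^ β := by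
        have hle : goldG ^ (β + δ n) ≤ goldG ^ β := (Real.rpow_le_rpow_left_iff hG1).2 hβδβ
        rw [hysplit, ← mul_assoc]
        exact mul_le_mul_of_nonneg_left hle (mul_pos qZero_pos hP0).le
      have hymin : qZero * P * goldG ^ (β/2) ≤ y n := by
        have hle : goldG ^ (β/2) ≤ goldG ^ (β + δ n) :=
          (Real.rpow_le_rpow_left_iff hG1).2 (by have := hδn.1; linarith)
        rw [hysplit, ← mul_assoc]
        exact mul_le_mul_of_nonneg_left hle (mul_pos qZero_pos hP0).le
      have hGN : (goldG : ℝ) ^ (N:ℕ) = goldG * P := by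
        rw [← Real.rpow_natCast goldG N, hNR, Real.rpow_add hG0, Real.rpow_one, hPdef]
        ring
      have hGN1 : (goldG : ℝ) ^ (N - 1 : ℕ) = P := by
        have hcast : ((N - 1 : ℕ):ℝ) = (n:ℝ) + (FL:ℝ) := by
          rw [Nat.cast_sub hN1, hNR]; ring
        rw [← Real.rpow_natCast goldG (N-1), hcast, hPdef]
      have ha : y n < (fibS N : ℝ) := by
        have hfb := fib_bounds N
        rw [hGN, abs_le] at hfb
        calc y n ≤ qZero * P * goldG ^ β := hymax
          _ = qZero * (goldG * P) - (qZero * P * A) * goldG := by rw [hGβ, hAdef]; ring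
          _ ≤ qZero * (goldG * P) - goldG := by
              have h2 := mul_le_mul_of_nonneg_right hPA hG0.le
              rw [one_mul] at h2
              linarith
          _ < qZero * (goldG * P) - 1/2 := by linarith
          _ ≤ (fibS N : ℝ) := by linarith [hfb.1]
      have hb : (fibS (N-1) : ℝ) ≤ y n := by
        have hfb := fib_bounds (N-1)
        rw [hGN1, abs_le] at hfb
        calc (fibS (N-1):ℝ) ≤ qZero * P + 1/2 := by linarith [hfb.2]
          _ ≤ qZero * P + qZero * P * B := by nlinarith [hPB]
          _ = qZero * P * goldG ^ (β/2) := by rw [hBdef]; ring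
          _ ≤ y n := hymin
      have hy1 : 1 ≤ y n := by
        have hg : (1:ℝ) ≤ goldG ^ (β/2) := by rw [hBdef] at hB0; linarith
        have h2 : (1:ℝ) * 1 ≤ (qZero * P) * goldG ^ (β/2) :=
          mul_le_mul hP1 hg (by norm_num) (mul_pos qZero_pos hP0).le
        rw [one_mul] at h2
        linarith [hymin]
      have hmin : ∀ m, m < N → ¬ (y n < (fibS m : ℝ)) := by
        intro m hm
        rw [not_lt]
        calc (fibS m : ℝ) ≤ (fibS (N-1) : ℝ) := by
              exact_mod_cast fibS_mono.monotone (by omega : m ≤ N - 1)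
          _ ≤ y n := hb
      have hvol := tail_vol lam hlam0 hlam2 τ hτ (y n) N ha hmin
      rw [hh (y n) hy1, hvol, hM (y n) (hy0 n)]
      have hfract : Int.fract (Real.log (y n / qZero) / Real.log goldG) = β + δ n := by
        rw [hLy n]
        have hc2 : ((n:ℝ) + (FL:ℝ)) + (β + δ n) = (((n:ℤ) + FL : ℤ):ℝ) + (β + δ n) := by
          push_cast; ring
        rw [hc2, Int.fract_intCast_add, Int.fract_eq_self.2 ⟨hβδ0.le, hβδ1⟩]
      have hyα : y n ^ α = qZero ^ α * goldG ^ ((((n:ℝ)+(FL:ℝ)) + (β + δ n)) * α) := by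
        rw [hyrpow n, Real.mul_rpow qZero_pos.le (Real.rpow_nonneg hG0.le _),
          ← Real.rpow_mul hG0.le]
      have hlamN : (lam : ℝ) ^ (N:ℕ) = goldG ^ ((-α) * (N:ℝ)) := by
        rw [← hlamG, ← Real.rpow_natCast (goldG ^ (-α)) N, ← Real.rpow_mul hG0.le]
      have hexp : ((((n:ℝ)+(FL:ℝ)) + (β + δ n)) * α) + ((-α) * (N:ℝ))
          = (-α) + α * (β + δ n) := by
        rw [hNR]; ring
      rw [hyα, hlamN, hfract, ← hlamG]
      have key : qZero ^ α * goldG ^ ((((n:ℝ)+(FL:ℝ)) + (β + δ n)) * α)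
            * goldG ^ ((-α) * (N:ℝ))
          = goldG ^ (-α) * qZero ^ α * goldG ^ (α * (β + δ n)) := by
        rw [mul_assoc, ← Real.rpow_add hG0, hexp, Real.rpow_add hG0]
        ring
      linarith [key]
    refine Tendsto.congr' ?_ (tendsto_const_nhds (x := (0:ℝ)))
    filter_upwards [hzero] with n hn
    exact hn.symm
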